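/- Let K > 0 and let x₁,…,x_m ∈ ℝ^p be vectors all of whose coordinates lie in [−K, K]. Let Σ̂ = (1/m)∑_{i=1}^m xᵢ xᵢᵀ, and let Σ̂ = ∑_{j=1}^p λ̂ⱼ v̂ⱼ v̂ⱼᵀ be a spectral decomposition with orthonormal eigenvectors v̂ⱼ and eigenvalues λ̂ⱼ ≥ 0 ordered decreasingly. Then for every i, j, |√λ̂ᵢ · (v̂ᵢ)ⱼ| ≤ K; in particular, for any r̄ ≤ p, the matrix W = [√λ̂₁ v̂₁, …, √λ̂_r̄ v̂_r̄] ∈ ℝ^{p×r̄} satisfies ‖W‖_max ≤ K, where ‖·‖_max is the largest absolute value of an entry. -/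

import Mathlib

/-- Let `K > 0` and let `x₁,…,x_m ∈ ℝ^p` be vectors all of whose coordinates
lie in `[−K, K]`. Let `Σ̂ = (1/m)∑ᵢ xᵢ xᵢᵀ`, with spectral decomposition
`Σ̂ = ∑ⱼ λ̂ⱼ v̂ⱼ v̂ⱼᵀ` (orthonormal eigenvectors, eigenvalues `λ̂ⱼ ≥ 0` ordered decreasingly).
Then for every `i, j`, `|√λ̂ᵢ · (v̂ᵢ)ⱼ| ≤ K`; in particular for any `r̄ ≤ p` the matrix
`W = [√λ̂₁ v̂₁, …, √λ̂_r̄ v̂_r̄]` satisfies `‖W‖_max ≤ K`. -/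
theorem diversified_projection_entry_bound
    (m p : ℕ) (hm : 0 < m) (K : ℝ) (hK : 0 < K)
    (x : Fin m → Fin p → ℝ) (hx : ∀ i j, |x i j| ≤ K)
    (S : Matrix (Fin p) (Fin p) ℝ)
    (hS : S = (m : ℝ)⁻¹ • ∑ i, Matrix.vecMulVec (x i) (x i))
    (lam : Fin p → ℝ) (v : Fin p → Fin p → ℝ)
    (hlam : ∀ i, 0 ≤ lam i)
    (hmono : ∀ i j : Fin p, i ≤ j → lam j ≤ lam i)
    (horth : ∀ i j, dotProduct (v i) (v j) = if i = j then (1 : ℝ) else 0)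
    (hdecomp : S = ∑ i, lam i • Matrix.vecMulVec (v i) (v i)) :
    (∀ i j, |Real.sqrt (lam i) * v i j| ≤ K) ∧
      ∀ (r : ℕ) (hr : r ≤ p) (W : Matrix (Fin p) (Fin r) ℝ),
        (∀ (j : Fin p) (k : Fin r),
          W j k = Real.sqrt (lam (Fin.castLE hr k)) * v (Fin.castLE hr k) j) →
        ∀ (j : Fin p) (k : Fin r), |W j k| ≤ K := by
  have key : ∀ i j, |Real.sqrt (lam i) * v i j| ≤ K := by
    intro i j
    -- diagonal entry bound
    have hdiag1 : S j j = (m : ℝ)⁻¹ * ∑ k, (x k j) ^ 2 := by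
      rw [hS]
      simp [Matrix.vecMulVec, Matrix.sum_apply, sq, Matrix.of_apply]
    have hdiag2 : S j j = ∑ k, lam k * (v k j) ^ 2 := by
      rw [hdecomp]
      simp [Matrix.vecMulVec, Matrix.sum_apply, sq, Matrix.of_apply, mul_assoc]
    have hSle : S j j ≤ K ^ 2 := by
      rw [hdiag1]
      have h1 : ∑ k, (x k j) ^ 2 ≤ ∑ _k : Fin m, K ^ 2 := by
        apply Finset.sum_le_sum
        intro k _
        have := hx k j
        nlinarith [abs_nonneg (x k j), sq_abs (x k j)]
      have h2 : (∑ _k : Fin m, K ^ 2) = (m : ℝ) * K ^ 2 := by simp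
      have hm' : (0 : ℝ) < m := by exact_mod_cast hm
      calc (m : ℝ)⁻¹ * ∑ k, (x k j) ^ 2 ≤ (m : ℝ)⁻¹ * ((m : ℝ) * K ^ 2) := by
            apply mul_le_mul_of_nonneg_left _ (by positivity)
            rw [← h2]; exact h1
        _ = K ^ 2 := by field_simp
    have hterm : lam i * (v i j) ^ 2 ≤ S j j := by
      rw [hdiag2]
      apply Finset.single_le_sum (f := fun k => lam k * (v k j) ^ 2)
      · intro k _; exact mul_nonneg (hlam k) (sq_nonneg _)
      · exact Finset.mem_univ i
    have hsq : (Real.sqrt (lam i) * v i j) ^ 2 ≤ K ^ 2 := by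
      have : (Real.sqrt (lam i) * v i j) ^ 2 = lam i * (v i j) ^ 2 := by
        rw [mul_pow, Real.sq_sqrt (hlam i)]
      rw [this]; exact le_trans hterm hSle
    rw [abs_le]
    constructor <;> nlinarith
  refine ⟨key, ?_⟩
  intro r hr W hW j k
  rw [hW]
  exact key _ _
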